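/- The polynomials I_n satisfy the Nielsen identity: for all nonnegative integers m, n, I_{m+n} = m!·n! · ∑_{k=0}^{min(m,n)} (2α)^k / k! · I_{m-k}/(m-k)! · I_{n-k}/(n-k)!. -/

import Mathlib

open MvPolynomial

noncomputable def Ipoly (ν α ξ : ℂ) : ℕ → MvPolynomial (Fin 2) ℂ
  | 0 => 1
  | 1 => C ν * X 1 - C (2 * α) * X 0 - C ξ
  | (n + 2) => (C ν * X 1 - C (2 * α) * X 0 - C ξ) * Ipoly ν α ξ (n + 1)
      + C (2 * α * (n + 1)) * Ipoly ν α ξ n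

namespace NielsenAux

noncomputable def S (ν α ξ : ℂ) (m n : ℕ) : MvPolynomial (Fin 2) ℂ :=
  ∑ k ∈ Finset.range (n + 1),
    C ((2 * α) ^ k * (k.factorial : ℂ) * (m.choose k : ℂ) * (n.choose k : ℂ)) *
      Ipoly ν α ξ (m - k) * Ipoly ν α ξ (n - k)

lemma Ipoly_zero (ν α ξ : ℂ) : Ipoly ν α ξ 0 = 1 := rfl

lemma Ipoly_rec (ν α ξ : ℂ) (m : ℕ) :
    Ipoly ν α ξ (m + 1) =
      (C ν * X 1 - C (2 * α) * X 0 - C ξ) * Ipoly ν α ξ m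
        + C (2 * α * m) * Ipoly ν α ξ (m - 1) := by
  cases m with
  | zero => simp [Ipoly]
  | succ k =>
    show Ipoly ν α ξ (k + 2) = _
    rw [Ipoly]
    push_cast
    ring_nf

lemma nat1 (m k : ℕ) : (k + 1) * m.choose (k + 1) = m * (m - 1).choose k := by
  cases m with
  | zero => simp
  | succ j =>
    have := Nat.add_one_mul_choose_eq j k
    simpa [mul_comm] using this.symm

lemma nat2 (t k : ℕ) : (t + 1 - k) * (t + 1).choose k = (t + 1) * t.choose k := by
  rw [mul_comm, ← Nat.choose_succ_right_eq, ← Nat.add_one_mul_choose_eq]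

lemma step (ν α ξ : ℂ) (m t : ℕ) :
    S ν α ξ m (t + 2) =
      (C ν * X 1 - C (2 * α) * X 0 - C ξ) * S ν α ξ m (t + 1)
        + C (2 * α * (t + 1)) * S ν α ξ m t
        + C (2 * α * m) * S ν α ξ (m - 1) (t + 1) := by
  set a : ℂ := 2 * α with ha
  set L : MvPolynomial (Fin 2) ℂ := C ν * X 1 - C (2 * α) * X 0 - C ξ with hL
  set I : ℕ → MvPolynomial (Fin 2) ℂ := Ipoly ν α ξ with hI
  -- g : the intermediate family
  set g : ℕ → MvPolynomial (Fin 2) ℂ := fun k =>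
    C (a ^ k * (k.factorial : ℂ) * (m.choose k : ℂ) * ((t + 1).choose k : ℂ)) *
      I (m - k) * I (t + 2 - k) with hg
  have hsplit : S ν α ξ m (t + 2) =
      C (a * m) * S ν α ξ (m - 1) (t + 1) + ∑ k ∈ Finset.range (t + 3), g k := by
    rw [S, Finset.sum_range_succ']
    have hterm : ∀ k ∈ Finset.range (t + 2),
        C (a ^ (k + 1) * ((k + 1).factorial : ℂ) * (m.choose (k + 1) : ℂ) *
            ((t + 2).choose (k + 1) : ℂ)) * I (m - (k + 1)) * I (t + 2 - (k + 1)) =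
          C (a * m) * (C (a ^ k * (k.factorial : ℂ) * ((m - 1).choose k : ℂ) *
            ((t + 1).choose k : ℂ)) * I (m - 1 - k) * I (t + 1 - k)) + g (k + 1) := by
      intro k _
      have hmk : m - (k + 1) = m - 1 - k := by omega
      have htk : t + 2 - (k + 1) = t + 1 - k := by omega
      have hpas : ((t + 2).choose (k + 1) : ℂ) =
          ((t + 1).choose k : ℂ) + ((t + 1).choose (k + 1) : ℂ) := by
        exact_mod_cast congrArg (Nat.cast (R := ℂ)) (Nat.choose_succ_succ (t + 1) k)
      have h1 : ((k : ℂ) + 1) * (m.choose (k + 1) : ℂ) =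
          (m : ℂ) * ((m - 1).choose k : ℂ) := by exact_mod_cast nat1 m k
      have hcoef : a ^ (k + 1) * ((k + 1).factorial : ℂ) * (m.choose (k + 1) : ℂ) *
          ((t + 2).choose (k + 1) : ℂ) =
          a * m * (a ^ k * (k.factorial : ℂ) * ((m - 1).choose k : ℂ) *
            ((t + 1).choose k : ℂ)) +
          a ^ (k + 1) * ((k + 1).factorial : ℂ) * (m.choose (k + 1) : ℂ) *
            ((t + 1).choose (k + 1) : ℂ) := by
        rw [hpas, Nat.factorial_succ]
        push_cast
        linear_combination (a ^ (k + 1) * (k.factorial : ℂ) * ((t + 1).choose k : ℂ)) * h1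
      simp only [hg]
      rw [hmk, htk, hcoef]
      simp only [C_add, C_mul]
      ring
    rw [Finset.sum_congr rfl hterm, Finset.sum_add_distrib, ← Finset.mul_sum]
    have hg0 : g 0 = C (((t + 2).choose 0 : ℂ)) * I (m - 0) * I (t + 2 - 0) := by
      rw [hg]; norm_num
    have hf0 : C (a ^ 0 * ((0 : ℕ).factorial : ℂ) * (m.choose 0 : ℂ) *
        ((t + 2).choose 0 : ℂ)) * I (m - 0) * I (t + 2 - 0)
        = g 0 := by rw [hg0]; norm_num
    rw [hf0, S]
    rw [Finset.sum_range_succ' g (t + 2)]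
    ring
  rw [hsplit]
  -- now handle ∑ g over range (t+3)
  have hgtop : g (t + 2) = 0 := by
    rw [hg]; simp
  rw [Finset.sum_range_succ g (t + 2), hgtop, add_zero]
  have hterm2 : ∀ k ∈ Finset.range (t + 2),
      g k = L * (C (a ^ k * (k.factorial : ℂ) * (m.choose k : ℂ) *
          ((t + 1).choose k : ℂ)) * I (m - k) * I (t + 1 - k)) +
        C (a * (t + 1)) * (C (a ^ k * (k.factorial : ℂ) * (m.choose k : ℂ) *
          (t.choose k : ℂ)) * I (m - k) * I (t - k)) := by
    intro k hk
    rw [Finset.mem_range] at hk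
    have h2 : t + 2 - k = (t + 1 - k) + 1 := by omega
    have h3 : t + 1 - k - 1 = t - k := by omega
    have hrec := Ipoly_rec ν α ξ (t + 1 - k)
    rw [← hI, ← hL, ← ha] at hrec
    simp only [hg]
    rw [h2, hrec, h3]
    have hc2 : (((t + 1 - k : ℕ)) : ℂ) * ((t + 1).choose k : ℂ) =
        ((t : ℂ) + 1) * (t.choose k : ℂ) := by exact_mod_cast nat2 t k
    have hcoef2 : (a ^ k * (k.factorial : ℂ) * (m.choose k : ℂ) *
        ((t + 1).choose k : ℂ)) * (a * ((t + 1 - k : ℕ) : ℂ)) =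
        (a * ((t : ℂ) + 1)) * (a ^ k * (k.factorial : ℂ) * (m.choose k : ℂ) *
          (t.choose k : ℂ)) := by
      linear_combination (a ^ k * a * (k.factorial : ℂ) * (m.choose k : ℂ)) * hc2
    calc C (a ^ k * (k.factorial : ℂ) * (m.choose k : ℂ) * ((t + 1).choose k : ℂ)) *
          I (m - k) * (L * I (t + 1 - k) + C (a * ((t + 1 - k : ℕ) : ℂ)) * I (t - k))
        = L * (C (a ^ k * (k.factorial : ℂ) * (m.choose k : ℂ) *
            ((t + 1).choose k : ℂ)) * I (m - k) * I (t + 1 - k)) +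
          C ((a ^ k * (k.factorial : ℂ) * (m.choose k : ℂ) * ((t + 1).choose k : ℂ)) *
            (a * ((t + 1 - k : ℕ) : ℂ))) * (I (m - k) * I (t - k)) := by
          simp only [C_mul]; ring
      _ = _ := by rw [hcoef2]; simp only [C_mul]; ring
  rw [Finset.sum_congr rfl hterm2, Finset.sum_add_distrib, ← Finset.mul_sum,
    ← Finset.mul_sum]
  have hS1 : S ν α ξ m (t + 1) = ∑ k ∈ Finset.range (t + 2),
      C (a ^ k * (k.factorial : ℂ) * (m.choose k : ℂ) * ((t + 1).choose k : ℂ)) *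
        I (m - k) * I (t + 1 - k) := rfl
  have hS0 : (∑ k ∈ Finset.range (t + 2),
      C (a ^ k * (k.factorial : ℂ) * (m.choose k : ℂ) * (t.choose k : ℂ)) *
        I (m - k) * I (t - k)) = S ν α ξ m t := by
    rw [Finset.sum_range_succ, Nat.choose_succ_self]
    simp only [Nat.cast_zero, mul_zero, C_0, zero_mul, add_zero]
    rfl
  rw [← hS1, hS0]
  ring


lemma main (ν α ξ : ℂ) (p : ℕ) :
    ∀ m n, m + n = p → Ipoly ν α ξ (m + n) = S ν α ξ m n := by
  induction p using Nat.strong_induction_on with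
  | _ p ih =>
    intro m n hp
    match n, hp with
    | 0, hp =>
      rw [S, Finset.sum_range_one]
      have h0 : Ipoly ν α ξ 0 = 1 := rfl
      norm_num [h0]
    | 1, hp =>
      rw [S, Finset.sum_range_succ, Finset.sum_range_one, Ipoly_rec ν α ξ m,
        Nat.choose_one_right]
      have h0 : Ipoly ν α ξ 0 = 1 := rfl
      have h1 : Ipoly ν α ξ 1 = C ν * X 1 - C (2 * α) * X 0 - C ξ := rfl
      norm_num [h0, h1]
      ring
    | (t + 2), hp =>
      rw [show m + (t + 2) = (m + t + 1) + 1 from by omega, Ipoly_rec ν α ξ (m + t + 1)]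
      have hA : Ipoly ν α ξ (m + t + 1) = S ν α ξ m (t + 1) := by
        have := ih (m + t + 1) (by omega) m (t + 1) (by omega)
        rwa [show m + (t + 1) = m + t + 1 from by omega] at this
      have hB : Ipoly ν α ξ (m + t + 1 - 1) = S ν α ξ m t := by
        have := ih (m + t) (by omega) m t rfl
        rwa [show m + t + 1 - 1 = m + t from by omega]
      rw [hA, hB, step]
      cases m with
      | zero =>
        simp only [Nat.cast_zero, mul_zero, C_0, zero_mul, add_zero]
        push_cast
        ring
      | succ j =>
        have hC : S ν α ξ (j + 1 - 1) (t + 1) = S ν α ξ (j + 1) t := by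
          have h1 := ih (j + 1 + t) (by omega) (j + 1 - 1) (t + 1) (by omega)
          have h2 := ih (j + 1 + t) (by omega) (j + 1) t rfl
          rw [show j + 1 - 1 + (t + 1) = j + 1 + t from by omega] at h1
          rw [← h1, ← h2]
        rw [hC, show (2 * α * ((j + 1 + t + 1 : ℕ) : ℂ)) =
          2 * α * ((t : ℂ) + 1) + 2 * α * ((j + 1 : ℕ) : ℂ) from by push_cast; ring, C_add]
        ring

end NielsenAux

theorem stmt3 (ν α ξ : ℂ) (m n : ℕ) :
    Ipoly ν α ξ (m + n) =
      C ((m.factorial : ℂ) * (n.factorial : ℂ)) *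
        ∑ k ∈ Finset.range (min m n + 1),
          C ((2 * α) ^ k / ((k.factorial : ℂ) * ((m - k).factorial : ℂ)
              * ((n - k).factorial : ℂ))) *
            Ipoly ν α ξ (m - k) * Ipoly ν α ξ (n - k) := by
  rw [NielsenAux.main ν α ξ (m + n) m n rfl, NielsenAux.S, Finset.mul_sum]
  have hsub : Finset.range (min m n + 1) ⊆ Finset.range (n + 1) :=
    Finset.range_subset_range.mpr (by omega)
  have hvan : ∀ k ∈ Finset.range (n + 1), k ∉ Finset.range (min m n + 1) →
      C ((2 * α) ^ k * (k.factorial : ℂ) * (m.choose k : ℂ) * (n.choose k : ℂ)) *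
        Ipoly ν α ξ (m - k) * Ipoly ν α ξ (n - k) = 0 := by
    intro k _ hk
    rw [Finset.mem_range, not_lt] at hk
    have : m.choose k = 0 ∨ n.choose k = 0 := by
      rcases min_lt_iff.mp (by omega : min m n < k) with h | h
      · exact Or.inl (Nat.choose_eq_zero_of_lt h)
      · exact Or.inr (Nat.choose_eq_zero_of_lt h)
    rcases this with h | h <;> rw [h] <;> simp
  rw [← Finset.sum_subset hsub hvan]
  apply Finset.sum_congr rfl
  intro k hk
  rw [Finset.mem_range] at hk
  have hkm : k ≤ m := by omega
  have hkn : k ≤ n := by omega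
  have hc : (2 * α) ^ k * (k.factorial : ℂ) * (m.choose k : ℂ) * (n.choose k : ℂ) =
      ((m.factorial : ℂ) * (n.factorial : ℂ)) *
        ((2 * α) ^ k / ((k.factorial : ℂ) * ((m - k).factorial : ℂ)
          * ((n - k).factorial : ℂ))) := by
    rw [Nat.cast_choose ℂ hkm, Nat.cast_choose ℂ hkn]
    have n1 : (k.factorial : ℂ) ≠ 0 := Nat.cast_ne_zero.mpr (Nat.factorial_ne_zero k)
    have n2 : ((m - k).factorial : ℂ) ≠ 0 := Nat.cast_ne_zero.mpr (Nat.factorial_ne_zero _)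
    have n3 : ((n - k).factorial : ℂ) ≠ 0 := Nat.cast_ne_zero.mpr (Nat.factorial_ne_zero _)
    field_simp
  rw [hc, C_mul]
  ring
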